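/- arXiv:1007.3240 — 2 statements merged into one kernel-verified Lean document; each statement's English description precedes it below -/
import Mathlib

section
/- The total barrier potential V(g) = Σ_{l=1}^{∞} V_l(g), where V_l(g) = l³·k·(g − η/l)² if g ≤ η/l and 0 otherwise, tends to infinity as g → 0⁺. -/
open Filter

/-- The total barrier potential `V(g) = Σ_l l³·k·(g − η/l)²·𝟙[g ≤ η/l]`
tends to infinity as `g → 0⁺`. -/
theorem barrier_potential_tendsto_atTop (k η : ℝ) (hk : 0 < k) (hη : 0 < η) :
    Tendsto (fun g : ℝ => ∑' l : ℕ,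
        if 0 < l ∧ g ≤ η / (l : ℝ) then (l : ℝ) ^ 3 * k * (g - η / l) ^ 2 else 0)
      (nhdsWithin 0 (Set.Ioi 0)) atTop := by
  rw [tendsto_atTop]
  intro b
  set c := k * η ^ 2 / 4 with hc
  have hc0 : 0 < c := by positivity
  obtain ⟨N₀, hN₀⟩ := exists_nat_ge (b / c)
  set N := max N₀ 1 with hNdef
  have hN1 : 1 ≤ N := le_max_right _ _
  have hNR : (0 : ℝ) < N := by exact_mod_cast lt_of_lt_of_le one_pos hN1
  have hNb : b ≤ N * c := by
    have h1 : b / c ≤ (N : ℝ) := hN₀.trans (by exact_mod_cast le_max_left _ _)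
    have := mul_le_mul_of_nonneg_right h1 hc0.le
    rwa [div_mul_cancel₀ _ hc0.ne'] at this
  have hmem : Set.Ioo (0 : ℝ) (η / (2 * N)) ∈ nhdsWithin (0 : ℝ) (Set.Ioi 0) := by
    apply Ioo_mem_nhdsGT_of_mem
    exact ⟨le_refl 0, by positivity⟩
  filter_upwards [hmem] with g hg
  obtain ⟨hg0, hgN⟩ := hg
  set f : ℕ → ℝ := fun l =>
    if 0 < l ∧ g ≤ η / (l : ℝ) then (l : ℝ) ^ 3 * k * (g - η / l) ^ 2 else 0 with hf
  have hnn : ∀ l, 0 ≤ f l := by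
    intro l
    simp only [hf]
    split
    · positivity
    · exact le_refl 0
  have hsum : Summable f := by
    apply summable_of_ne_finset_zero (s := Finset.range (⌈η / g⌉₊ + 1))
    intro l hl
    simp only [Finset.mem_range, not_lt] at hl
    have hlg : η / g < (l : ℝ) := by
      have h1 : (η / g : ℝ) ≤ (⌈η / g⌉₊ : ℝ) := Nat.le_ceil _
      have h2 : (⌈η / g⌉₊ : ℝ) < (l : ℝ) := by exact_mod_cast hl
      linarith
    have hl0 : (0 : ℝ) < l := lt_trans (by positivity) hlg
    have : η / (l : ℝ) < g := by
      rw [div_lt_iff₀ hl0]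
      rw [div_lt_iff₀ hg0] at hlg
      linarith
    simp only [hf]
    rw [if_neg]
    rintro ⟨-, h⟩
    linarith
  have key : ∀ l ∈ Finset.Icc 1 N, c ≤ f l := by
    intro l hl
    rw [Finset.mem_Icc] at hl
    obtain ⟨hl1, hlN⟩ := hl
    have hlR : (1 : ℝ) ≤ l := by exact_mod_cast hl1
    have hlN' : (l : ℝ) ≤ N := by exact_mod_cast hlN
    have hl0 : (0 : ℝ) < l := lt_of_lt_of_le one_pos hlR
    have hkey : g ≤ η / (2 * l) := by
      apply hgN.le.trans
      apply div_le_div_of_nonneg_left hη.le (by positivity)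
      linarith
    have hgl : g ≤ η / l := hkey.trans (by
      rw [div_le_div_iff₀ (by positivity) hl0]
      nlinarith)
    have hcond : 0 < l ∧ g ≤ η / (l : ℝ) := ⟨hl1, hgl⟩
    simp only [hf, if_pos hcond]
    have hdiff : η / (2 * l) ≤ η / l - g := by
      have : η / l - η / (2 * l) = η / (2 * l) := by field_simp; ring
      linarith
    have hsq : (η / (2 * l)) ^ 2 ≤ (g - η / l) ^ 2 := by
      have h1 : 0 ≤ η / (2 * l) := by positivity
      nlinarith
    have : (l : ℝ) ^ 3 * k * (η / (2 * l)) ^ 2 = l * c := by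
      field_simp [hc]
      ring
    nlinarith [mul_le_mul_of_nonneg_left hsq (by positivity : (0:ℝ) ≤ (l:ℝ)^3 * k),
      mul_le_mul_of_nonneg_right hlR hc0.le]
  calc b ≤ N * c := hNb
    _ = (Finset.Icc 1 N).card • c := by
        rw [Nat.card_Icc]; simp [nsmul_eq_mul]
    _ ≤ ∑ l ∈ Finset.Icc 1 N, f l := Finset.card_nsmul_le_sum _ _ _ key
    _ ≤ ∑' l, f l := hsum.sum_le_tsum _ (fun l _ => hnn l)
end

section
/- A trajectory q = (q_0, ..., q_{n−1}) is a critical point of the asynchronous discrete action S_g(q) = Σ_{j=0}^{n−2}(ξ(j+1)−ξ(j))·½ (q_{j+1}−q_j)ᵀM(q_{j+1}−q_j)/(ξ(j+1)−ξ(j))² − Σ_{j=1}^{n−1} Σ_{i : h^i | ξ(j)} h^i V^i(q_j) with respect to variations fixing the endpoints if and only if M(v_{j+1/2} − v_{j−1/2}) = −Σ_{i : h^i | ξ(j)} h^i ∇V^i(q_j) for j = 1, ..., n−2, where v_{j+1/2} = (q_{j+1}−q_j)/(ξ(j+1)−ξ(j)). -/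
open Finset
open scoped RealInnerProductSpace Classical

variable {d : ℕ}

local notation "E" => EuclideanSpace ℝ (Fin d)

private lemma aux_affine (x y u v : E) :
    HasDerivAt (fun s : ℝ => (x + s • u) - (y + s • v)) (u - v) 0 := by
  have h1 : HasDerivAt (fun s : ℝ => x + s • u) u 0 := by
    simpa using ((hasDerivAt_id (0:ℝ)).smul_const u).const_add x
  have h2 : HasDerivAt (fun s : ℝ => y + s • v) v 0 := by
    simpa using ((hasDerivAt_id (0:ℝ)).smul_const v).const_add y
  exact h1.sub h2

private lemma aux_kin (M : E →L[ℝ] E) (x y u v : E) (c : ℝ) :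
    HasDerivAt (fun s : ℝ => c * ((1/2) * ⟪M ((x + s • u) - (y + s • v)),
        (x + s • u) - (y + s • v)⟫ / c ^ 2))
      (c * ((1/2) * (⟪M (x - y), u - v⟫ + ⟪M (u - v), x - y⟫) / c ^ 2)) 0 := by
  have h1 := aux_affine x y u v
  have h2 : HasDerivAt (fun s : ℝ => M ((x + s • u) - (y + s • v))) (M (u - v)) 0 :=
    M.hasFDerivAt.comp_hasDerivAt 0 h1
  have h3 := HasDerivAt.inner ℝ h2 h1
  simp only [zero_smul, add_zero] at h3
  exact ((h3.const_mul (1/2 : ℝ)).div_const (c^2)).const_mul c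

private lemma aux_pot {V : E → ℝ} (hV : ContDiff ℝ 1 V) (a b : E) (h : ℝ) (P : Prop)
    [Decidable P] :
    HasDerivAt (fun s : ℝ => if P then h * V (a + s • b) else 0)
      (if P then h * ⟪gradient V a, b⟫ else 0) 0 := by
  by_cases hP : P
  · simp only [if_pos hP]
    have h1 : HasDerivAt (fun s : ℝ => a + s • b) b 0 := by
      simpa using ((hasDerivAt_id (0:ℝ)).smul_const b).const_add a
    have hdiff : DifferentiableAt ℝ V (a + (0:ℝ) • b) :=
      (hV.differentiable one_ne_zero).differentiableAt
    have hg := hdiff.hasGradientAt.hasFDerivAt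
    have h2 := hg.comp_hasDerivAt 0 h1
    simp only [zero_smul, add_zero, InnerProductSpace.toDual_apply_apply] at h2 ⊢
    exact h2.const_mul h
  · simp only [if_neg hP]; exact hasDerivAt_const 0 0

/-- The momentum `p_j = M v_{j+1/2}`. -/
noncomputable def auxP (M : E →L[ℝ] E) (ξ : ℕ → ℝ) (q : ℕ → E) (j : ℕ) : E :=
  (1 / (ξ (j+1) - ξ j)) • M (q (j+1) - q j)

/-- The total force at event `j`. -/
noncomputable def auxF {N : ℕ} (V : Fin N → E → ℝ) (hstep : Fin N → ℝ)
    (ξ : ℕ → ℝ) (q : ℕ → E) (j : ℕ) : E :=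
  ∑ i : Fin N, if ∃ m : ℕ, ξ j = (m : ℝ) * hstep i then
    hstep i • gradient (V i) (q j) else 0

private lemma key_deriv {n N : ℕ} (hn : 2 ≤ n)
    (M : E →L[ℝ] E)
    (hMsymm : ∀ x y : E, ⟪M x, y⟫ = ⟪x, M y⟫)
    (V : Fin N → E → ℝ) (hV : ∀ i, ContDiff ℝ 1 (V i))
    (hstep : Fin N → ℝ)
    (ξ : ℕ → ℝ) (hξ : StrictMono ξ)
    (q : ℕ → E) (δ : ℕ → E) (h0 : δ 0 = 0) (h1 : δ (n - 1) = 0) :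
    deriv (fun s : ℝ =>
          (∑ j ∈ range (n - 1),
            (ξ (j+1) - ξ j) *
              ((1/2) * ⟪M ((q (j+1) + s • δ (j+1)) - (q j + s • δ j)),
                  (q (j+1) + s • δ (j+1)) - (q j + s • δ j)⟫ / (ξ (j+1) - ξ j) ^ 2))
          - ∑ j ∈ Icc 1 (n - 1), ∑ i : Fin N,
              if ∃ m : ℕ, ξ j = (m : ℝ) * hstep i then
                hstep i * V i (q j + s • δ j) else 0) 0
      = ∑ k ∈ range (n - 2),
          ⟪auxP M ξ q k - auxP M ξ q (k+1) - auxF V hstep ξ q (k+1), δ (k+1)⟫ := by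
  have hd : HasDerivAt (fun s : ℝ =>
          (∑ j ∈ range (n - 1),
            (ξ (j+1) - ξ j) *
              ((1/2) * ⟪M ((q (j+1) + s • δ (j+1)) - (q j + s • δ j)),
                  (q (j+1) + s • δ (j+1)) - (q j + s • δ j)⟫ / (ξ (j+1) - ξ j) ^ 2))
          - ∑ j ∈ Icc 1 (n - 1), ∑ i : Fin N,
              if ∃ m : ℕ, ξ j = (m : ℝ) * hstep i then
                hstep i * V i (q j + s • δ j) else 0)
      ((∑ j ∈ range (n - 1),
          (ξ (j+1) - ξ j) *
            ((1/2) * (⟪M (q (j+1) - q j), δ (j+1) - δ j⟫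
              + ⟪M (δ (j+1) - δ j), q (j+1) - q j⟫) / (ξ (j+1) - ξ j) ^ 2))
        - ∑ j ∈ Icc 1 (n - 1), ∑ i : Fin N,
            if ∃ m : ℕ, ξ j = (m : ℝ) * hstep i then
              hstep i * ⟪gradient (V i) (q j), δ j⟫ else 0) 0 := by
    refine HasDerivAt.sub ?_ ?_
    · exact HasDerivAt.fun_sum fun j _ => aux_kin M (q (j+1)) (q j) (δ (j+1)) (δ j) _
    · exact HasDerivAt.fun_sum fun j _ => HasDerivAt.fun_sum fun i _ =>
        aux_pot (hV i) (q j) (δ j) (hstep i) _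
  rw [hd.deriv]
  -- rewrite kinetic terms
  have hkin : ∀ j : ℕ,
      (ξ (j+1) - ξ j) *
        ((1/2) * (⟪M (q (j+1) - q j), δ (j+1) - δ j⟫
          + ⟪M (δ (j+1) - δ j), q (j+1) - q j⟫) / (ξ (j+1) - ξ j) ^ 2)
      = ⟪auxP M ξ q j, δ (j+1)⟫ - ⟪auxP M ξ q j, δ j⟫ := by
    intro j
    have hc : ξ (j+1) - ξ j ≠ 0 := ne_of_gt (sub_pos.mpr (hξ (lt_add_one j)))
    have ht : ⟪M (δ (j+1) - δ j), q (j+1) - q j⟫ = ⟪M (q (j+1) - q j), δ (j+1) - δ j⟫ := by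
      rw [hMsymm]; exact real_inner_comm _ _
    rw [ht, ← inner_sub_right, auxP, real_inner_smul_left]
    field_simp
    ring
  -- rewrite potential terms
  have hpot : ∀ j : ℕ,
      (∑ i : Fin N, if ∃ m : ℕ, ξ j = (m : ℝ) * hstep i then
          hstep i * ⟪gradient (V i) (q j), δ j⟫ else 0)
      = ⟪auxF V hstep ξ q j, δ j⟫ := by
    intro j
    rw [auxF, sum_inner]
    refine Finset.sum_congr rfl fun i _ => ?_
    by_cases hP : ∃ m : ℕ, ξ j = (m : ℝ) * hstep i
    · rw [if_pos hP, if_pos hP, real_inner_smul_left]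
    · rw [if_neg hP, if_neg hP, inner_zero_left]
  rw [Finset.sum_congr rfl fun j _ => hkin j]
  have hpots : (∑ j ∈ Icc 1 (n - 1), ∑ i : Fin N,
        if ∃ m : ℕ, ξ j = (m : ℝ) * hstep i then
          hstep i * ⟪gradient (V i) (q j), δ j⟫ else 0)
      = ∑ j ∈ range (n - 1), ⟪auxF V hstep ξ q (j+1), δ (j+1)⟫ := by
    rw [Finset.sum_congr rfl fun j _ => hpot j]
    have : Icc 1 (n - 1) = Ico 1 ((n-1)+1) := (Finset.Ico_add_one_right_eq_Icc 1 (n-1)).symm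
    rw [this, Finset.sum_Ico_eq_sum_range]
    simp only [Nat.add_sub_cancel]
    exact Finset.sum_congr rfl fun j _ => by rw [Nat.add_comm 1 j]
  rw [hpots]
  have hm2 : n - 1 = (n - 2) + 1 := by omega
  have hm2' : (n - 2) + 1 = n - 1 := hm2.symm
  have hA : (∑ j ∈ range (n-1), (⟪auxP M ξ q j, δ (j+1)⟫ - ⟪auxP M ξ q j, δ j⟫))
      = (∑ j ∈ range (n-2), ⟪auxP M ξ q j, δ (j+1)⟫)
        - ∑ j ∈ range (n-2), ⟪auxP M ξ q (j+1), δ (j+1)⟫ := by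
    rw [Finset.sum_sub_distrib]
    congr 1
    · rw [hm2, Finset.sum_range_succ, hm2', h1, inner_zero_right, add_zero]
    · rw [hm2, Finset.sum_range_succ', h0, inner_zero_right, add_zero]
  have hB : (∑ j ∈ range (n-1), ⟪auxF V hstep ξ q (j+1), δ (j+1)⟫)
      = ∑ j ∈ range (n-2), ⟪auxF V hstep ξ q (j+1), δ (j+1)⟫ := by
    rw [hm2, Finset.sum_range_succ, hm2', h1, inner_zero_right, add_zero]
  rw [hA, hB]
  rw [← Finset.sum_sub_distrib, ← Finset.sum_sub_distrib]
  exact Finset.sum_congr rfl fun j _ => by rw [inner_sub_left, inner_sub_left]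

/-- A trajectory `q₀, …, q_{n−1}` is a critical point of the asynchronous discrete
action `S_g` (kinetic terms over the intervals `[ξ(j), ξ(j+1)]`, and each
potential `Vⁱ` contributing `hⁱ Vⁱ(q_j)` at times `ξ(j)` divisible by `hⁱ`) with
respect to variations fixing the endpoints iff the asynchronous discrete
Euler–Lagrange equations
`M(v_{j+1/2} − v_{j−1/2}) = −Σ_{i : hⁱ | ξ(j)} hⁱ ∇Vⁱ(q_j)` hold for
`j = 1, …, n−2`. -/
theorem async_action_critical_iff_EL {d n N : ℕ} (hn : 2 ≤ n)
    (M : EuclideanSpace ℝ (Fin d) →L[ℝ] EuclideanSpace ℝ (Fin d))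
    (hMsymm : ∀ x y, ⟪M x, y⟫ = ⟪x, M y⟫)
    (hMpos : ∀ x, x ≠ 0 → 0 < ⟪M x, x⟫)
    (V : Fin N → EuclideanSpace ℝ (Fin d) → ℝ) (hV : ∀ i, ContDiff ℝ 1 (V i))
    (hstep : Fin N → ℝ) (hsteppos : ∀ i, 0 < hstep i)
    (ξ : ℕ → ℝ) (hξ : StrictMono ξ)
    (q : ℕ → EuclideanSpace ℝ (Fin d)) :
    (∀ δ : ℕ → EuclideanSpace ℝ (Fin d), δ 0 = 0 → δ (n - 1) = 0 →
        deriv (fun s : ℝ =>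
          (∑ j ∈ range (n - 1),
            (ξ (j+1) - ξ j) *
              ((1/2) * ⟪M ((q (j+1) + s • δ (j+1)) - (q j + s • δ j)),
                  (q (j+1) + s • δ (j+1)) - (q j + s • δ j)⟫ / (ξ (j+1) - ξ j) ^ 2))
          - ∑ j ∈ Icc 1 (n - 1), ∑ i : Fin N,
              if ∃ m : ℕ, ξ j = (m : ℝ) * hstep i then
                hstep i * V i (q j + s • δ j) else 0) 0 = 0) ↔
      (∀ j : ℕ, 1 ≤ j → j ≤ n - 2 →
        M ((1 / (ξ (j+1) - ξ j)) • (q (j+1) - q j)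
            - (1 / (ξ j - ξ (j-1))) • (q j - q (j-1)))
          = -(∑ i : Fin N,
              if ∃ m : ℕ, ξ j = (m : ℝ) * hstep i then
                hstep i • gradient (V i) (q j) else 0)) := by
  -- the LHS of the EL equation equals `auxP j - auxP (j-1)`, RHS is `-auxF j`
  have hEL : ∀ j : ℕ, 1 ≤ j →
      ((M ((1 / (ξ (j+1) - ξ j)) • (q (j+1) - q j)
            - (1 / (ξ j - ξ (j-1))) • (q j - q (j-1)))
          = -(∑ i : Fin N,
              if ∃ m : ℕ, ξ j = (m : ℝ) * hstep i then
                hstep i • gradient (V i) (q j) else 0))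
      ↔ auxP M ξ q (j-1) - auxP M ξ q j - auxF V hstep ξ q j = 0) := by
    intro j hj
    have hj1 : j - 1 + 1 = j := by omega
    have hlhs : M ((1 / (ξ (j+1) - ξ j)) • (q (j+1) - q j)
            - (1 / (ξ j - ξ (j-1))) • (q j - q (j-1)))
        = auxP M ξ q j - auxP M ξ q (j-1) := by
      rw [map_sub, map_smul, map_smul, auxP, auxP, hj1]
    rw [hlhs]
    constructor
    · intro h
      have h' : auxP M ξ q j - auxP M ξ q (j-1) = -auxF V hstep ξ q j := h
      have h2 := congrArg (fun z : EuclideanSpace ℝ (Fin d) => -z) h'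
      simp only [neg_sub, neg_neg] at h2
      rw [sub_eq_zero]
      exact h2
    · intro h
      have h' : auxP M ξ q (j-1) - auxP M ξ q j = auxF V hstep ξ q j := sub_eq_zero.mp h
      have h2 := congrArg (fun z : EuclideanSpace ℝ (Fin d) => -z) h'
      simp only [neg_sub] at h2
      exact h2
  constructor
  · intro H j hj1 hj2
    rw [hEL j hj1]
    set G : EuclideanSpace ℝ (Fin d) :=
      auxP M ξ q (j-1) - auxP M ξ q j - auxF V hstep ξ q j with hG
    set δ : ℕ → EuclideanSpace ℝ (Fin d) := fun m => if m = j then G else 0 with hδ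
    have h0 : δ 0 = 0 := if_neg (by omega)
    have h1 : δ (n-1) = 0 := if_neg (by omega)
    have hcrit := H δ h0 h1
    rw [key_deriv hn M hMsymm V hV hstep ξ hξ q δ h0 h1] at hcrit
    rw [Finset.sum_eq_single (j-1)] at hcrit
    · have hj' : j - 1 + 1 = j := by omega
      rw [hj'] at hcrit
      simp only [hδ, if_pos rfl] at hcrit
      exact inner_self_eq_zero.mp hcrit
    · intro k _ hk
      have : ¬ (k + 1 = j) := by omega
      simp [hδ, this]
    · intro hmem
      exfalso
      exact hmem (Finset.mem_range.mpr (by omega))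
  · intro H δ h0 h1
    rw [key_deriv hn M hMsymm V hV hstep ξ hξ q δ h0 h1]
    refine Finset.sum_eq_zero fun k hk => ?_
    have hk' := Finset.mem_range.mp hk
    have hel := (hEL (k+1) (by omega)).mp (H (k+1) (by omega) (by omega))
    rw [Nat.add_sub_cancel] at hel
    rw [hel, inner_zero_left]
end
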